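/- Let S and Y be discrete semigroups with identities and nets E₁, E₂ in P_f(S), P_f(Y). Let π : S → Y be a surjective homomorphism with d*_{E₁}(π⁻¹(B)) = d*_{E₂}(B) for every B ⊆ Y, and let π̃ : βS → βY be its continuous extension. Then π̃ maps D*_{E₁} onto D*_{E₂}. -/
import Mathlib


open scoped Classical symmDiff

/-- The translate `F · s` of a finite piece `F` by an element of `S ∪ {1}`
(`none` meaning "no shift"). -/
def netShift {S : Type*} [Mul S] (F : Set S) : Option S → Set S
  | none => F
  | some t => (· * t) '' F

/-- Upper Banach density of `A ⊆ S` with respect to a net `F = ⟨F i⟩` of finite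
nonempty subsets of `S`, indexed by a directed preorder `I`. -/
noncomputable def uBD {S : Type*} [Mul S] {I : Type*} [Preorder I]
    (F : I → Set S) (A : Set S) : ℝ :=
  sSup {α : ℝ | ∀ i₀ : I, ∃ i, i₀ ≤ i ∧ ∃ s : Option S,
    α * ((F i).ncard : ℝ) ≤ ((A ∩ netShift (F i) s).ncard : ℝ)}

section Aux

variable {S : Type*} [Mul S] {I : Type*} [Preorder I] [Nonempty I]

/-- The defining set of `uBD`. -/
def uBDSet (F : I → Set S) (A : Set S) : Set ℝ :=
  {α : ℝ | ∀ i₀ : I, ∃ i, i₀ ≤ i ∧ ∃ s : Option S,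
    α * ((F i).ncard : ℝ) ≤ ((A ∩ netShift (F i) s).ncard : ℝ)}

lemma uBD_eq_sSup (F : I → Set S) (A : Set S) : uBD F A = sSup (uBDSet F A) := rfl

lemma netShift_finite {F : I → Set S} (hfin : ∀ i, (F i).Finite) (i : I) (s : Option S) :
    (netShift (F i) s).Finite := by
  cases s with
  | none => exact hfin i
  | some t => exact (hfin i).image _

lemma netShift_ncard_le {F : I → Set S} (hfin : ∀ i, (F i).Finite) (i : I) (s : Option S) :
    (netShift (F i) s).ncard ≤ (F i).ncard := by
  cases s with
  | none => exact le_rfl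
  | some t => exact Set.ncard_image_le (hfin i)

lemma zero_mem_uBDSet (F : I → Set S) (A : Set S) : (0 : ℝ) ∈ uBDSet F A := by
  intro i₀
  exact ⟨i₀, le_rfl, none, by simp⟩

lemma uBDSet_nonempty (F : I → Set S) (A : Set S) : (uBDSet F A).Nonempty :=
  ⟨0, zero_mem_uBDSet F A⟩

lemma uBDSet_subset_Iic {F : I → Set S} (hfin : ∀ i, (F i).Finite)
    (hne : ∀ i, (F i).Nonempty) (A : Set S) : uBDSet F A ⊆ Set.Iic 1 := by
  intro α hα
  obtain ⟨i, -, s, h⟩ := hα (Classical.arbitrary I)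
  have h1 : (A ∩ netShift (F i) s).ncard ≤ (F i).ncard :=
    le_trans (Set.ncard_le_ncard Set.inter_subset_right (netShift_finite hfin i s))
      (netShift_ncard_le hfin i s)
  have hpos : (0 : ℝ) < ((F i).ncard : ℝ) := by
    exact_mod_cast (Set.ncard_pos (hfin i)).mpr (hne i)
  have : α * ((F i).ncard : ℝ) ≤ 1 * ((F i).ncard : ℝ) := by
    refine h.trans ?_
    simpa using (Nat.cast_le.mpr h1 : ((A ∩ netShift (F i) s).ncard : ℝ) ≤ (F i).ncard)
  exact le_of_mul_le_mul_right this hpos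

lemma uBDSet_bddAbove {F : I → Set S} (hfin : ∀ i, (F i).Finite)
    (hne : ∀ i, (F i).Nonempty) (A : Set S) : BddAbove (uBDSet F A) :=
  ⟨1, fun _ h => uBDSet_subset_Iic hfin hne A h⟩

lemma uBD_nonneg {F : I → Set S} (hfin : ∀ i, (F i).Finite)
    (hne : ∀ i, (F i).Nonempty) (A : Set S) : 0 ≤ uBD F A :=
  le_csSup (uBDSet_bddAbove hfin hne A) (zero_mem_uBDSet F A)

lemma uBD_mono {F : I → Set S} (hfin : ∀ i, (F i).Finite)
    (hne : ∀ i, (F i).Nonempty) {A B : Set S} (hAB : A ⊆ B) : uBD F A ≤ uBD F B := by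
  refine csSup_le_csSup (uBDSet_bddAbove hfin hne B) (uBDSet_nonempty F A) ?_
  intro α hα i₀
  obtain ⟨i, hi, s, h⟩ := hα i₀
  refine ⟨i, hi, s, h.trans ?_⟩
  exact_mod_cast Set.ncard_le_ncard (Set.inter_subset_inter_left _ hAB)
    ((netShift_finite hfin i s).subset Set.inter_subset_right)

lemma uBD_union_le {F : I → Set S} (hfin : ∀ i, (F i).Finite)
    (hne : ∀ i, (F i).Nonempty) (hdir : ∀ i j : I, ∃ k, i ≤ k ∧ j ≤ k) (A B : Set S) :
    uBD F (A ∪ B) ≤ uBD F A + uBD F B := by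
  refine csSup_le (uBDSet_nonempty F (A ∪ B)) ?_
  intro α hα
  by_contra hcon
  push_neg at hcon
  set ε := α - (uBD F A + uBD F B) with hε
  have hεpos : 0 < ε := by simp [hε]; linarith
  have hβ : uBD F A + ε / 2 ∉ uBDSet F A := fun hmem => by
    have h := le_csSup (uBDSet_bddAbove hfin hne A) hmem
    rw [← uBD_eq_sSup] at h
    linarith
  have hγ : uBD F B + ε / 2 ∉ uBDSet F B := fun hmem => by
    have h := le_csSup (uBDSet_bddAbove hfin hne B) hmem
    rw [← uBD_eq_sSup] at h
    linarith
  simp only [uBDSet, Set.mem_setOf_eq, not_forall, not_exists, not_and, not_le] at hβ hγ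
  obtain ⟨i₀, hi₀⟩ := hβ
  obtain ⟨i₁, hi₁⟩ := hγ
  obtain ⟨i₂, h₂₀, h₂₁⟩ := hdir i₀ i₁
  obtain ⟨i, hi, s, h⟩ := hα i₂
  have hA := hi₀ i (h₂₀.trans hi) s
  have hB := hi₁ i (h₂₁.trans hi) s
  have hsplit : ((A ∪ B) ∩ netShift (F i) s).ncard
      ≤ (A ∩ netShift (F i) s).ncard + (B ∩ netShift (F i) s).ncard := by
    rw [Set.union_inter_distrib_right]
    exact Set.ncard_union_le _ _
  have hsplit' : (((A ∪ B) ∩ netShift (F i) s).ncard : ℝ)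
      ≤ ((A ∩ netShift (F i) s).ncard : ℝ) + ((B ∩ netShift (F i) s).ncard : ℝ) := by
    exact_mod_cast hsplit
  have hpos : (0 : ℝ) < ((F i).ncard : ℝ) := by
    exact_mod_cast (Set.ncard_pos (hfin i)).mpr (hne i)
  have : α * ((F i).ncard : ℝ)
      < (uBD F A + ε / 2 + (uBD F B + ε / 2)) * ((F i).ncard : ℝ) := by
    calc α * ((F i).ncard : ℝ) ≤ (((A ∪ B) ∩ netShift (F i) s).ncard : ℝ) := h
      _ ≤ ((A ∩ netShift (F i) s).ncard : ℝ) + ((B ∩ netShift (F i) s).ncard : ℝ) := hsplit'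
      _ < (uBD F A + ε / 2) * ((F i).ncard : ℝ) + (uBD F B + ε / 2) * ((F i).ncard : ℝ) := by
          exact add_lt_add hA hB
      _ = (uBD F A + ε / 2 + (uBD F B + ε / 2)) * ((F i).ncard : ℝ) := by ring
  have heq : uBD F A + ε / 2 + (uBD F B + ε / 2) = α := by rw [hε]; ring
  rw [heq] at this
  exact lt_irrefl _ this

lemma uBD_pos_nonempty {F : I → Set S} (hfin : ∀ i, (F i).Finite)
    (hne : ∀ i, (F i).Nonempty) {A : Set S} (h : 0 < uBD F A) : A.Nonempty := by
  rcases Set.eq_empty_or_nonempty A with rfl | hA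
  · exfalso
    have : uBD F (∅ : Set S) ≤ 0 := by
      refine csSup_le (uBDSet_nonempty F ∅) ?_
      intro α hα
      obtain ⟨i, -, s, hle⟩ := hα (Classical.arbitrary I)
      have hpos : (0 : ℝ) < ((F i).ncard : ℝ) := by
        exact_mod_cast (Set.ncard_pos (hfin i)).mpr (hne i)
      simp only [Set.empty_inter, Set.ncard_empty, Nat.cast_zero] at hle
      nlinarith
    linarith
  · exact hA

lemma one_le_uBD_univ {F : I → Set S} (hfin : ∀ i, (F i).Finite)
    (hne : ∀ i, (F i).Nonempty) : (1 : ℝ) ≤ uBD F Set.univ := by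
  refine le_csSup (uBDSet_bddAbove hfin hne _) ?_
  intro i₀
  exact ⟨i₀, le_rfl, none, by simp [netShift]⟩

/-- The filter of sets whose complement has zero upper Banach density. -/
def coNullFilter (F : I → Set S) (hfin : ∀ i, (F i).Finite)
    (hne : ∀ i, (F i).Nonempty) (hdir : ∀ i j : I, ∃ k, i ≤ k ∧ j ≤ k) : Filter S where
  sets := {C | uBD F Cᶜ ≤ 0}
  univ_sets := by
    simp only [Set.mem_setOf_eq, Set.compl_univ]
    have := uBD_pos_nonempty hfin hne (F := F) (A := (∅ : Set S))
    by_contra hcon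
    push_neg at hcon
    exact absurd (this hcon) (by simp)
  sets_of_superset := by
    intro C D hC hCD
    simp only [Set.mem_setOf_eq] at *
    exact le_trans (uBD_mono hfin hne (Set.compl_subset_compl.mpr hCD)) hC
  inter_sets := by
    intro C D hC hD
    simp only [Set.mem_setOf_eq, Set.compl_inter] at *
    exact le_trans (uBD_union_le hfin hne hdir _ _) (by linarith)

lemma mem_coNullFilter {F : I → Set S} {hfin : ∀ i, (F i).Finite}
    {hne : ∀ i, (F i).Nonempty} {hdir : ∀ i j : I, ∃ k, i ≤ k ∧ j ≤ k} {C : Set S} :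
    C ∈ coNullFilter F hfin hne hdir ↔ uBD F Cᶜ ≤ 0 := Iff.rfl

end Aux

theorem map_DStar_onto_DStar {S Y : Type*} [Monoid S] [Monoid Y]
    {I₁ I₂ : Type*} [Preorder I₁] [Preorder I₂] [Nonempty I₁] [Nonempty I₂]
    (E₁ : I₁ → Set S) (E₂ : I₂ → Set Y)
    (h₁fin : ∀ i, (E₁ i).Finite) (h₁ne : ∀ i, (E₁ i).Nonempty)
    (h₂fin : ∀ i, (E₂ i).Finite) (h₂ne : ∀ i, (E₂ i).Nonempty)
    (h₁dir : ∀ i j : I₁, ∃ k, i ≤ k ∧ j ≤ k) (h₂dir : ∀ i j : I₂, ∃ k, i ≤ k ∧ j ≤ k)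
    (π : S → Y) (hhom : ∀ a b : S, π (a * b) = π a * π b) (hsurj : Function.Surjective π)
    (hdens : ∀ B : Set Y, uBD E₁ (π ⁻¹' B) = uBD E₂ B) :
    Ultrafilter.map π '' {p : Ultrafilter S | ∀ A ∈ p, 0 < uBD E₁ A}
      = {q : Ultrafilter Y | ∀ B ∈ q, 0 < uBD E₂ B} := by
  ext q
  constructor
  · rintro ⟨p, hp, rfl⟩ B hB
    rw [← hdens B]
    exact hp _ (Ultrafilter.mem_map.mp hB)
  · intro hq
    -- Build the filter generated by `π ⁻¹' B`, `B ∈ q`, together with complements of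
    -- zero-density sets.
    set zf := coNullFilter E₁ h₁fin h₁ne h₁dir with hzf
    set f : Filter S := Filter.comap π ↑q ⊓ zf with hf
    -- Every member of `f` contains a set of positive density, hence is nonempty.
    have hkey : ∀ U ∈ f, ∃ V ⊆ U, 0 < uBD E₁ V := by
      intro U hU
      rw [hf, Filter.mem_inf_iff] at hU
      obtain ⟨s, hs, t, ht, rfl⟩ := hU
      obtain ⟨B, hB, hBs⟩ := Filter.mem_comap.mp hs
      refine ⟨π ⁻¹' B ∩ t, Set.inter_subset_inter hBs le_rfl, ?_⟩
      have hsub : π ⁻¹' B ⊆ (π ⁻¹' B ∩ t) ∪ tᶜ := by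
        intro x hx
        by_cases hxt : x ∈ t
        · exact Or.inl ⟨hx, hxt⟩
        · exact Or.inr hxt
      have h1 : uBD E₁ (π ⁻¹' B) ≤ uBD E₁ (π ⁻¹' B ∩ t) + uBD E₁ tᶜ :=
        le_trans (uBD_mono h₁fin h₁ne hsub) (uBD_union_le h₁fin h₁ne h₁dir _ _)
      have h2 : uBD E₁ tᶜ ≤ 0 := ht
      have h3 : 0 < uBD E₁ (π ⁻¹' B) := by rw [hdens]; exact hq B hB
      linarith
    have hfne : f.NeBot := by
      rw [← Filter.forall_mem_nonempty_iff_neBot]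
      intro U hU
      obtain ⟨V, hVU, hV⟩ := hkey U hU
      exact (uBD_pos_nonempty h₁fin h₁ne hV).mono hVU
    set p := Ultrafilter.of f with hp
    have hpf : ↑p ≤ f := Ultrafilter.of_le f
    refine ⟨p, ?_, ?_⟩
    · -- every member of `p` has positive density
      intro A hA
      by_contra hcon
      push_neg at hcon
      have hA0 : uBD E₁ A ≤ 0 := hcon
      have hAc : Aᶜ ∈ zf := by
        rw [mem_coNullFilter]
        simpa using hA0
      have : Aᶜ ∈ p := hpf (Filter.mem_inf_of_right hAc)
      exact (Ultrafilter.compl_notMem_iff.mpr hA) this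
    · -- `map π p = q`
      have hle : ↑p ≤ Filter.comap π ↑q := hpf.trans inf_le_left
      have : (↑(Ultrafilter.map π p) : Filter Y) ≤ ↑q := by
        calc (↑(Ultrafilter.map π p) : Filter Y) = Filter.map π ↑p := rfl
          _ ≤ Filter.map π (Filter.comap π ↑q) := Filter.map_mono hle
          _ = ↑q := Filter.map_comap_of_surjective hsurj _
      exact Ultrafilter.coe_le_coe.mp this
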